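/- Let γ = 0 and d = 0, and let L > 0. Then every eigenvalue Λ of the linearisation L_pin about the unique pinned fluxon for parameters (L, 0, 0) satisfies −1 < Λ < 0; in particular the pinned fluxon is linearly stable. -/

import Mathlib

open Real Filter Topology

/-- The piecewise-constant Josephson tunneling critical current:
`D(x) = d` for `|x| < L` and `D(x) = 1` for `|x| > L`. -/
noncomputable def Dfun (L d : ℝ) (x : ℝ) : ℝ := if |x| < L then d else 1

/-- A pinned fluxon for parameters `(L, d, γ)`. -/
def IsPinnedFluxon (L d γ : ℝ) (φ : ℝ → ℝ) : Prop :=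
  ContDiff ℝ 1 φ ∧
  (∀ x : ℝ, x ≠ -L → x ≠ L →
    ∃ φ'' : ℝ, HasDerivAt (deriv φ) φ'' x ∧
      φ'' - Dfun L d x * Real.sin (φ x) + γ = 0) ∧
  Tendsto φ atBot (𝓝 (Real.arcsin γ)) ∧
  Tendsto φ atTop (𝓝 (Real.arcsin γ + 2 * π)) ∧
  Tendsto (deriv φ) atBot (𝓝 0) ∧
  Tendsto (deriv φ) atTop (𝓝 0)

/-- `ψ` is an eigenfunction of the linearisation about `φpin` with eigenvalue `Λ`. -/
def IsEigenfun (L d γ : ℝ) (φpin : ℝ → ℝ) (Λ : ℝ) (ψ : ℝ → ℝ) : Prop :=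
  ψ ≠ 0 ∧ ContDiff ℝ 1 ψ ∧
  (∀ x : ℝ, x ≠ -L → x ≠ L →
    ∃ ψ'' : ℝ, HasDerivAt (deriv ψ) ψ'' x ∧
      ψ'' - Dfun L d x * Real.cos (φpin x) * ψ x = Λ * ψ x) ∧
  Tendsto ψ atBot (𝓝 0) ∧ Tendsto ψ atTop (𝓝 0) ∧
  Tendsto (deriv ψ) atBot (𝓝 0) ∧ Tendsto (deriv ψ) atTop (𝓝 0)

open Set

namespace Aux7

lemma monoOn_of_hasDeriv {f f' : ℝ → ℝ} {s : Set ℝ} (hs : Convex ℝ s)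
    (hc : ContinuousOn f s) (hd : ∀ x ∈ interior s, HasDerivAt f (f' x) x)
    (h0 : ∀ x ∈ interior s, 0 ≤ f' x) : MonotoneOn f s := by
  refine monotoneOn_of_deriv_nonneg hs hc
    (fun x hx => (hd x hx).differentiableAt.differentiableWithinAt) ?_
  intro x hx; rw [(hd x hx).deriv]; exact h0 x hx

lemma antiOn_of_hasDeriv {f f' : ℝ → ℝ} {s : Set ℝ} (hs : Convex ℝ s)
    (hc : ContinuousOn f s) (hd : ∀ x ∈ interior s, HasDerivAt f (f' x) x)
    (h0 : ∀ x ∈ interior s, f' x ≤ 0) : AntitoneOn f s := by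
  refine antitoneOn_of_deriv_nonpos hs hc
    (fun x hx => (hd x hx).differentiableAt.differentiableWithinAt) ?_
  intro x hx; rw [(hd x hx).deriv]; exact h0 x hx

lemma constOn_of_deriv_zero {f : ℝ → ℝ} {s : Set ℝ} (hs : Convex ℝ s)
    (hc : ContinuousOn f s) (hd : ∀ x ∈ interior s, HasDerivAt f 0 x) :
    ∀ x ∈ s, ∀ y ∈ s, f x = f y := by
  have hm := monoOn_of_hasDeriv hs hc hd (fun x _ => le_rfl)
  have ha := antiOn_of_hasDeriv hs hc hd (fun x _ => le_rfl)
  intro x hx y hy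
  rcases le_total x y with h | h
  · exact le_antisymm (hm hx hy h) (ha hx hy h)
  · exact le_antisymm (ha hy hx h) (hm hy hx h)

lemma gronwall_zero {f F : ℝ → ℝ} {K : ℝ} {s : Set ℝ} (hs : Convex ℝ s)
    (hfc : Continuous f) (hf0 : ∀ x, 0 ≤ f x)
    (hd : ∀ x ∈ interior s, HasDerivAt f (F x) x)
    (hb : ∀ x ∈ interior s, |F x| ≤ K * f x)
    {x₁ : ℝ} (hx₁ : x₁ ∈ s) (h1 : f x₁ = 0) : ∀ x ∈ s, f x = 0 := by
  have hexp : ∀ c : ℝ, ∀ x : ℝ, HasDerivAt (fun y => Real.exp (c * y)) (c * Real.exp (c * x)) x := by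
    intro c x
    have h := ((hasDerivAt_id x).const_mul c).exp
    simpa [mul_comm] using h
  have hganti : AntitoneOn (fun x => f x * Real.exp (-K * x)) s := by
    apply antiOn_of_hasDeriv (f' := fun x => F x * Real.exp (-K * x) + f x * (-K * Real.exp (-K * x))) hs
    · exact (hfc.mul (Real.continuous_exp.comp (continuous_const.mul continuous_id))).continuousOn
    · intro x hx; exact (hd x hx).mul (hexp (-K) x)
    · intro x hx
      have h1 := (abs_le.1 (hb x hx)).2
      have h2 : (0:ℝ) < Real.exp (-K * x) := Real.exp_pos _
      nlinarith [h2.le]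
  have hgmono : MonotoneOn (fun x => f x * Real.exp (K * x)) s := by
    apply monoOn_of_hasDeriv (f' := fun x => F x * Real.exp (K * x) + f x * (K * Real.exp (K * x))) hs
    · exact (hfc.mul (Real.continuous_exp.comp (continuous_const.mul continuous_id))).continuousOn
    · intro x hx; exact (hd x hx).mul (hexp K x)
    · intro x hx
      have h1 := (abs_le.1 (hb x hx)).1
      have h2 : (0:ℝ) < Real.exp (K * x) := Real.exp_pos _
      nlinarith [h2.le]
  intro x hx
  rcases le_total x₁ x with h | h
  · have := hganti hx₁ hx h
    simp only [h1, zero_mul] at this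
    have h2 : (0:ℝ) < Real.exp (-K * x) := Real.exp_pos _
    nlinarith [hf0 x]
  · have := hgmono hx hx₁ h
    simp only [h1, zero_mul] at this
    have h2 : (0:ℝ) < Real.exp (K * x) := Real.exp_pos _
    nlinarith [hf0 x]

/-- If the sine-Gordon solution touches an equilibrium in a region, it is flat there. -/
lemma phi_flat {φ : ℝ → ℝ} {s : Set ℝ} (hs : Convex ℝ s)
    (hφd : Differentiable ℝ φ) (hφ'c : Continuous (deriv φ))
    (hso : ∀ x ∈ interior s, HasDerivAt (deriv φ) (Real.sin (φ x)) x)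
    {c x₁ : ℝ} (hx₁ : x₁ ∈ s) (hcos : Real.cos c = 1)
    (h1 : φ x₁ = c) (h2 : deriv φ x₁ = 0) :
    ∀ x ∈ s, φ x = c ∧ deriv φ x = 0 := by
  have hsin : Real.sin c = 0 := by
    have h := Real.sin_sq_add_cos_sq c
    have : Real.sin c ^ 2 = 0 := by nlinarith
    exact pow_eq_zero_iff two_ne_zero |>.mp this
  set f : ℝ → ℝ := fun x => (φ x - c)^2 + (deriv φ x)^2 with hf
  set F : ℝ → ℝ := fun x => 2*(φ x - c)*(deriv φ x) + 2*(deriv φ x)*(Real.sin (φ x)) with hF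
  have hfc : Continuous f := ((hφd.continuous.sub continuous_const).pow 2).add (hφ'c.pow 2)
  have hf0 : ∀ x, 0 ≤ f x := fun x => by positivity
  have hz := gronwall_zero (F := F) (K := 2) hs hfc hf0 ?_ ?_ hx₁ (by simp [hf, h1, h2]) 
  · intro x hx
    have := hz x hx
    simp only [hf] at this
    constructor
    · have hh : (φ x - c)^2 = 0 := by nlinarith [sq_nonneg (φ x - c), sq_nonneg (deriv φ x)]
      have := pow_eq_zero_iff two_ne_zero |>.mp hh
      linarith
    · have hh : (deriv φ x)^2 = 0 := by nlinarith [sq_nonneg (φ x - c), sq_nonneg (deriv φ x)]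
      exact pow_eq_zero_iff two_ne_zero |>.mp hh
  · intro x hx
    have h1 := ((hφd x).hasDerivAt.sub_const c).fun_pow 2
    have h2 := (hso x hx).fun_pow 2
    have := h1.fun_add h2
    refine this.congr_deriv ?_
    simp only [hF]; ring
  · intro x hx
    have hsx : Real.sin (φ x) = Real.sin (φ x - c) := by
      conv_lhs => rw [show φ x = (φ x - c) + c by ring]
      rw [Real.sin_add, hsin, hcos]; ring
    have habs : |Real.sin (φ x - c)| ≤ |φ x - c| := Real.abs_sin_le_abs
    have hs2 : Real.sin (φ x - c)^2 ≤ (φ x - c)^2 := by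
      have := pow_le_pow_left₀ (abs_nonneg _) habs 2
      simpa [sq_abs] using this
    simp only [hF, hf, hsx]
    rw [abs_le]
    constructor <;>
      nlinarith [sq_nonneg (φ x - c + deriv φ x), sq_nonneg (φ x - c - deriv φ x),
        sq_nonneg (deriv φ x + Real.sin (φ x - c)), sq_nonneg (deriv φ x - Real.sin (φ x - c))]

lemma sin_match {u v : ℝ} (h0u : 0 < u) (huv : u < v) (hv : v < 2*π)
    (h : Real.sin (v/2) = Real.sin (u/2)) : v = 2*π - u := by
  have hpi := Real.pi_pos
  have hsub := Real.sin_sub_sin (v/2) (u/2)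
  rw [h, sub_self] at hsub
  have h1 : Real.sin ((v/2 - u/2)/2) > 0 := by
    apply Real.sin_pos_of_pos_of_lt_pi
    · linarith
    · nlinarith
  have h2 : Real.cos ((v/2 + u/2)/2) = 0 := by
    rcases mul_eq_zero.1 hsub.symm with h' | h'
    · rcases mul_eq_zero.1 h' with h'' | h''
      · norm_num at h''
      · exact absurd h'' (ne_of_gt h1)
    · exact h'
  rw [Real.cos_eq_zero_iff] at h2
  obtain ⟨k, hk⟩ := h2
  have hb1 : 0 < (v/2 + u/2)/2 := by linarith
  have hb2 : (v/2 + u/2)/2 < π := by nlinarith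
  have hk0 : k = 0 := by
    by_contra hk0
    rcases lt_or_gt_of_ne hk0 with h' | h'
    · have : (k:ℝ) ≤ -1 := by exact_mod_cast Int.le_of_lt_add_one (by simpa using h')
      nlinarith [hk, hb1]
    · have : (1:ℝ) ≤ (k:ℝ) := by exact_mod_cast h'
      nlinarith [hk, hb2]
  rw [hk0] at hk
  push_cast at hk
  nlinarith [hk]

/-- All the structural facts about the pinned fluxon with d = 0, γ = 0. -/
lemma phi_facts {L : ℝ} (hL : 0 < L) {φ : ℝ → ℝ}
    (hφ1 : ContDiff ℝ 1 φ)
    (hode : ∀ x : ℝ, x ≠ -L → x ≠ L → ∃ c : ℝ, HasDerivAt (deriv φ) c x ∧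
      c - Dfun L 0 x * Real.sin (φ x) + 0 = 0)
    (hbot : Tendsto φ atBot (𝓝 0)) (htop : Tendsto φ atTop (𝓝 (2*π)))
    (h'bot : Tendsto (deriv φ) atBot (𝓝 0)) (h'top : Tendsto (deriv φ) atTop (𝓝 0)) :
    (∀ x, 0 < deriv φ x) ∧ StrictMono φ ∧ (∀ x, 0 < φ x ∧ φ x < 2*π) ∧
    (∀ x, L ≤ x → deriv φ x = 2 * Real.sin (φ x / 2)) ∧
    (0 < Real.sin (φ (-L))) ∧ (Real.sin (φ L) = - Real.sin (φ (-L))) ∧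
    (∀ x : ℝ, L < |x| → HasDerivAt (deriv φ) (Real.sin (φ x)) x) ∧
    (∀ x ∈ Ioo (-L) L, HasDerivAt (deriv φ) (0:ℝ) x) := by
  have hpi := Real.pi_pos
  have hφd : Differentiable ℝ φ := hφ1.differentiable one_ne_zero
  have hφc : Continuous φ := hφd.continuous
  have hφ'c : Continuous (deriv φ) := hφ1.continuous_deriv le_rfl
  have hLL : -L < L := by linarith
  -- ODE in each region
  have hout : ∀ x : ℝ, L < |x| → HasDerivAt (deriv φ) (Real.sin (φ x)) x := by
    intro x hx
    have hx1 : x ≠ -L := by intro h; rw [h] at hx; rw [abs_neg, abs_of_pos hL] at hx; linarith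
    have hx2 : x ≠ L := by intro h; rw [h] at hx; rw [abs_of_pos hL] at hx; linarith
    obtain ⟨c, hc, he⟩ := hode x hx1 hx2
    have hD : Dfun L 0 x = 1 := if_neg (not_lt.2 hx.le)
    rw [hD] at he
    have : c = Real.sin (φ x) := by linarith
    rwa [this] at hc
  have hin : ∀ x ∈ Ioo (-L) L, HasDerivAt (deriv φ) (0:ℝ) x := by
    intro x hx
    obtain ⟨c, hc, he⟩ := hode x (ne_of_gt hx.1) (ne_of_lt hx.2)
    have hD : Dfun L 0 x = 0 := if_pos (abs_lt.2 ⟨hx.1, hx.2⟩)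
    rw [hD] at he
    have : c = 0 := by linarith
    rwa [this] at hc
  -- deriv φ is constant on [-L, L]
  have hconstIn : ∀ x ∈ Icc (-L) L, deriv φ x = deriv φ L := by
    intro x hx
    refine constOn_of_deriv_zero (convex_Icc (-L) L) hφ'c.continuousOn ?_ x hx L (right_mem_Icc.2 hLL.le)
    intro y hy; rw [interior_Icc] at hy; exact hin y hy
  -- first integral
  set E : ℝ → ℝ := fun x => deriv φ x ^ 2 / 2 + Real.cos (φ x) with hE
  have hEc : Continuous E := ((hφ'c.pow 2).div_const 2).add (Real.continuous_cos.comp hφc)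
  have hEd : ∀ x : ℝ, L < |x| → HasDerivAt E 0 x := by
    intro x hx
    have h1 := ((hout x hx).fun_pow 2).div_const 2
    have h2 := (hφd x).hasDerivAt.cos
    have := h1.fun_add h2
    refine this.congr_deriv ?_
    ring
  have hER : ∀ x, L ≤ x → E x = 1 := by
    have hconst : ∀ x ∈ Ici L, ∀ y ∈ Ici L, E x = E y := by
      refine constOn_of_deriv_zero (convex_Ici L) hEc.continuousOn ?_
      intro y hy; rw [interior_Ici] at hy
      have hy' : L < y := hy
      exact hEd y (by rw [abs_of_pos (by linarith : (0:ℝ) < y)]; exact hy')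
    intro x hx
    have hEtop : Tendsto E atTop (𝓝 ((0:ℝ)^2/2 + Real.cos (2*π))) :=
      ((h'top.pow 2).div_const 2).add ((Real.continuous_cos.tendsto (2*π)).comp htop)
    have hcc : Tendsto (fun _ : ℝ => E x) atTop (𝓝 ((0:ℝ)^2/2 + Real.cos (2*π))) := by
      refine hEtop.congr' ?_
      filter_upwards [eventually_ge_atTop L] with y hy
      exact hconst y hy x hx
    have := tendsto_nhds_unique hcc tendsto_const_nhds
    rw [← this]
    norm_num [Real.cos_two_pi]
  have hEL : ∀ x, x ≤ -L → E x = 1 := by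
    have hconst : ∀ x ∈ Iic (-L), ∀ y ∈ Iic (-L), E x = E y := by
      refine constOn_of_deriv_zero (convex_Iic (-L)) hEc.continuousOn ?_
      intro y hy; rw [interior_Iic] at hy
      have hy' : y < -L := hy
      exact hEd y (by rw [abs_of_neg (by linarith : y < 0)]; linarith)
    intro x hx
    have hEbot : Tendsto E atBot (𝓝 ((0:ℝ)^2/2 + Real.cos 0)) :=
      ((h'bot.pow 2).div_const 2).add ((Real.continuous_cos.tendsto 0).comp hbot)
    have hcc : Tendsto (fun _ : ℝ => E x) atBot (𝓝 ((0:ℝ)^2/2 + Real.cos 0)) := by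
      refine hEbot.congr' ?_
      filter_upwards [eventually_le_atBot (-L)] with y hy
      exact hconst y hy x hx
    have := tendsto_nhds_unique hcc tendsto_const_nhds
    rw [← this]
    norm_num
  have houtIci : ∀ y ∈ interior (Ici L), HasDerivAt (deriv φ) (Real.sin (φ y)) y := by
    intro y hy; rw [interior_Ici] at hy
    have hy' : L < y := hy
    exact hout y (by rw [abs_of_pos (by linarith : (0:ℝ) < y)]; exact hy')
  have houtIic : ∀ y ∈ interior (Iic (-L)), HasDerivAt (deriv φ) (Real.sin (φ y)) y := by
    intro y hy; rw [interior_Iic] at hy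
    have hy' : y < -L := hy
    exact hout y (by rw [abs_of_neg (by linarith : y < 0)]; linarith)
  have hlim_const : ∀ c : ℝ, (∀ x, L ≤ x → φ x = c) → c = 2*π := by
    intro c hc
    have hcc : Tendsto (fun _ : ℝ => c) atTop (𝓝 (2*π)) := by
      refine htop.congr' ?_
      filter_upwards [eventually_ge_atTop L] with y hy
      exact hc y hy
    exact tendsto_nhds_unique tendsto_const_nhds hcc
  have hlim_constB : ∀ c : ℝ, (∀ x, x ≤ -L → φ x = c) → c = 0 := by
    intro c hc
    have hcc : Tendsto (fun _ : ℝ => c) atBot (𝓝 0) := by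
      refine hbot.congr' ?_
      filter_upwards [eventually_le_atBot (-L)] with y hy
      exact hc y hy
    exact tendsto_nhds_unique tendsto_const_nhds hcc
  have hkeyR : ∀ x₁, L ≤ x₁ → deriv φ x₁ = 0 → ∀ x, L ≤ x → φ x = φ x₁ ∧ deriv φ x = 0 := by
    intro x₁ hx₁ h0
    have hcos : Real.cos (φ x₁) = 1 := by
      have h := hER x₁ hx₁
      simp only [hE, h0] at h
      norm_num at h
      linarith
    intro x hx
    exact phi_flat (convex_Ici L) hφd hφ'c houtIci (show x₁ ∈ Ici L from hx₁) hcos rfl h0 x hx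
  have hkeyL : ∀ x₁, x₁ ≤ -L → deriv φ x₁ = 0 → ∀ x, x ≤ -L → φ x = φ x₁ ∧ deriv φ x = 0 := by
    intro x₁ hx₁ h0
    have hcos : Real.cos (φ x₁) = 1 := by
      have h := hEL x₁ hx₁
      simp only [hE, h0] at h
      norm_num at h
      linarith
    intro x hx
    exact phi_flat (convex_Iic (-L)) hφd hφ'c houtIic (show x₁ ∈ Iic (-L) from hx₁) hcos rfl h0 x hx
  have hstuck : deriv φ L = 0 → False := by
    intro h0
    have hflat := hkeyR L le_rfl h0
    have hc2 : φ L = 2*π := hlim_const (φ L) (fun x hx => (hflat x hx).1)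
    have hinzero : ∀ x ∈ Icc (-L) L, deriv φ x = 0 := fun x hx => by rw [hconstIn x hx, h0]
    have hφconst : ∀ x ∈ Icc (-L) L, φ x = φ L := by
      intro x hx
      refine constOn_of_deriv_zero (convex_Icc (-L) L) hφc.continuousOn ?_ x hx L (right_mem_Icc.2 hLL.le)
      intro y hy
      rw [interior_Icc] at hy
      have h := (hφd y).hasDerivAt
      rw [hinzero y (Ioo_subset_Icc_self hy)] at h
      exact h
    have hmL : φ (-L) = 2*π := by rw [hφconst (-L) (left_mem_Icc.2 hLL.le), hc2]
    have hdL : deriv φ (-L) = 0 := hinzero (-L) (left_mem_Icc.2 hLL.le)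
    have hcosL : Real.cos (φ (-L)) = 1 := by rw [hmL]; exact Real.cos_two_pi
    have hflatL := phi_flat (convex_Iic (-L)) hφd hφ'c houtIic
      (show (-L) ∈ Iic (-L) from self_mem_Iic) hcosL rfl hdL
    have hc0 : φ (-L) = 0 := hlim_constB (φ (-L)) (fun x hx => (hflatL x hx).1)
    rw [hmL] at hc0
    linarith
  have hne : ∀ x, deriv φ x ≠ 0 := by
    intro x h0
    rcases le_or_gt L x with hx | hx
    · exact hstuck ((hkeyR x hx h0 L le_rfl).2)
    rcases le_or_gt x (-L) with hx' | hx'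
    · have h1 := (hkeyL x hx' h0 (-L) le_rfl).2
      have h2 : deriv φ L = 0 := by rw [← hconstIn (-L) (left_mem_Icc.2 hLL.le)]; exact h1
      exact hstuck h2
    · have h2 : deriv φ L = 0 := by rw [← hconstIn x ⟨hx'.le, hx.le⟩]; exact h0
      exact hstuck h2
  have hpos : ∀ x, 0 < deriv φ x := by
    by_contra hcon
    push_neg at hcon
    obtain ⟨x₂, hx₂⟩ := hcon
    have hx₂' : deriv φ x₂ < 0 := lt_of_le_of_ne hx₂ (hne x₂)
    have hall : ∀ y, deriv φ y < 0 := by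
      intro y
      rcases lt_trichotomy (deriv φ y) 0 with h | h | h
      · exact h
      · exact absurd h (hne y)
      · exfalso
        have hsub := intermediate_value_uIcc (a := x₂) (b := y) (f := deriv φ) hφ'c.continuousOn
        have h0m : (0:ℝ) ∈ uIcc (deriv φ x₂) (deriv φ y) := by
          rw [Set.mem_uIcc]; left; exact ⟨hx₂'.le, h.le⟩
        obtain ⟨z, _, hz⟩ := hsub h0m
        exact hne z hz
    have hanti : StrictAnti φ := strictAnti_of_deriv_neg hall
    have h1 : φ 0 ≤ 0 := hanti.antitone.ge_of_tendsto hbot 0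
    have h2 : 2*π ≤ φ 0 := hanti.antitone.le_of_tendsto htop 0
    linarith
  have hmono : StrictMono φ := strictMono_of_deriv_pos hpos
  have hub : ∀ x, φ x < 2*π := by
    intro x
    have h1 : φ (x+1) ≤ 2*π := hmono.monotone.ge_of_tendsto htop (x+1)
    have h2 := hmono (lt_add_one x)
    linarith
  have hlb : ∀ x, 0 < φ x := by
    intro x
    have h1 : (0:ℝ) ≤ φ (x-1) := hmono.monotone.le_of_tendsto hbot (x-1)
    have h2 := hmono (show x - 1 < x by linarith)
    linarith
  have hhalf : ∀ x, deriv φ x ^ 2 = 2*(1 - Real.cos (φ x)) → deriv φ x = 2 * Real.sin (φ x / 2) := by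
    intro x hsq
    have hs : 0 < Real.sin (φ x / 2) :=
      Real.sin_pos_of_pos_of_lt_pi (by linarith [hlb x]) (by linarith [hub x])
    have hcos2 : Real.cos (φ x) = 1 - 2 * Real.sin (φ x / 2)^2 := by
      have hct := Real.cos_two_mul (φ x / 2)
      have h2 : 2*(φ x/2) = φ x := by ring
      rw [h2] at hct
      have hpy := Real.sin_sq_add_cos_sq (φ x / 2)
      linarith
    have hsq2 : deriv φ x ^2 = (2*Real.sin (φ x/2))^2 := by rw [hsq, hcos2]; ring
    have hfac : (deriv φ x - 2*Real.sin (φ x/2)) * (deriv φ x + 2*Real.sin (φ x/2)) = 0 := by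
      linear_combination hsq2
    rcases mul_eq_zero.1 hfac with h | h
    · linarith
    · exfalso; have := hpos x; linarith
  have hsqR : ∀ x, L ≤ x → deriv φ x = 2 * Real.sin (φ x / 2) := by
    intro x hx
    refine hhalf x ?_
    have := hER x hx
    simp only [hE] at this
    linarith
  have hsqL : ∀ x, x ≤ -L → deriv φ x = 2 * Real.sin (φ x / 2) := by
    intro x hx
    refine hhalf x ?_
    have := hEL x hx
    simp only [hE] at this
    linarith
  have hdm : deriv φ (-L) = deriv φ L := hconstIn (-L) (left_mem_Icc.2 hLL.le)
  have hsv : Real.sin (φ L / 2) = Real.sin (φ (-L) / 2) := by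
    have h1 := hsqL (-L) le_rfl
    have h2 := hsqR L le_rfl
    linarith
  have huv : φ (-L) < φ L := hmono hLL
  have hveq : φ L = 2*π - φ (-L) := sin_match (hlb (-L)) huv (hub L) hsv
  have hupi : φ (-L) < π := by linarith
  have hsinu : 0 < Real.sin (φ (-L)) := Real.sin_pos_of_pos_of_lt_pi (hlb (-L)) hupi
  have hsinv : Real.sin (φ L) = - Real.sin (φ (-L)) := by
    rw [hveq, Real.sin_sub]
    simp [Real.sin_two_pi, Real.cos_two_pi]
  exact ⟨hpos, hmono, fun x => ⟨hlb x, hub x⟩, hsqR, hsinu, hsinv, hout, hin⟩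


/-- Uniqueness: an eigenfunction vanishing (with derivative) at a point is identically zero. -/
lemma eigen_unique {L Λ : ℝ} {φ ψ : ℝ → ℝ} (hL : 0 < L)
    (hψ1 : ContDiff ℝ 1 ψ)
    (heq : ∀ x : ℝ, x ≠ -L → x ≠ L →
      HasDerivAt (deriv ψ) ((Dfun L 0 x * Real.cos (φ x) + Λ) * ψ x) x)
    {x₀ : ℝ} (h0 : ψ x₀ = 0) (h0' : deriv ψ x₀ = 0) : ∀ x, ψ x = 0 := by
  have hψd : Differentiable ℝ ψ := hψ1.differentiable one_ne_zero
  have hψ'c : Continuous (deriv ψ) := hψ1.continuous_deriv le_rfl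
  set K : ℝ := 2 + |Λ| with hK
  set f : ℝ → ℝ := fun x => ψ x ^ 2 + deriv ψ x ^ 2 with hf
  set F : ℝ → ℝ := fun x => 2 * ψ x * deriv ψ x
      + 2 * deriv ψ x * ((Dfun L 0 x * Real.cos (φ x) + Λ) * ψ x) with hF
  have hfc : Continuous f := (hψd.continuous.pow 2).add (hψ'c.pow 2)
  have hf0 : ∀ x, 0 ≤ f x := fun x => by positivity
  have hfd : ∀ x : ℝ, x ≠ -L → x ≠ L → HasDerivAt f (F x) x := by
    intro x h1 h2
    have Hψ : HasDerivAt ψ (deriv ψ x) x := (hψd x).hasDerivAt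
    have := (Hψ.fun_pow 2).fun_add ((heq x h1 h2).fun_pow 2)
    refine this.congr_deriv ?_
    simp only [hF]
    ring
  have hbd : ∀ x : ℝ, x ≠ -L → x ≠ L → |F x| ≤ K * f x := by
    intro x h1 h2
    have hV : |Dfun L 0 x * Real.cos (φ x)| ≤ 1 := by
      unfold Dfun; split
      · simp
      · simpa using Real.abs_cos_le_one (φ x)
    have hab : |2 * ψ x * deriv ψ x| ≤ f x := by
      rw [abs_le]
      simp only [hf]
      constructor <;> nlinarith [sq_nonneg (ψ x + deriv ψ x), sq_nonneg (ψ x - deriv ψ x)]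
    have hco : |1 + (Dfun L 0 x * Real.cos (φ x) + Λ)| ≤ K := by
      calc |1 + (Dfun L 0 x * Real.cos (φ x) + Λ)|
          ≤ |1 + Dfun L 0 x * Real.cos (φ x)| + |Λ| := by
            have := abs_add_le (1 + Dfun L 0 x * Real.cos (φ x)) Λ
            simpa [add_assoc] using this
        _ ≤ 2 + |Λ| := by
            have := abs_add_le (1:ℝ) (Dfun L 0 x * Real.cos (φ x))
            have h1 : |(1:ℝ)| = 1 := by norm_num
            nlinarith
    have hFx : F x = (2 * ψ x * deriv ψ x) * (1 + (Dfun L 0 x * Real.cos (φ x) + Λ)) := by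
      simp only [hF]; ring
    rw [hFx, abs_mul]
    calc |2 * ψ x * deriv ψ x| * |1 + (Dfun L 0 x * Real.cos (φ x) + Λ)|
        ≤ f x * K := mul_le_mul hab hco (abs_nonneg _) (hf0 x)
      _ = K * f x := mul_comm _ _
  have hx0 : f x₀ = 0 := by simp [hf, h0, h0']
  -- propagate through the three regions
  have hLL : -L < L := by linarith
  have hz : ∀ x, f x = 0 := by
    have hIic : ∀ y ∈ Iic (-L), ∀ z ∈ Iic (-L), f y = 0 → f z = 0 := by
      intro y hy z hz h
      refine gronwall_zero (F := F) (K := K) (convex_Iic (-L)) hfc hf0 ?_ ?_ hy h z hz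
      · intro u hu; rw [interior_Iic] at hu
        exact hfd u (ne_of_lt hu) (by intro h; rw [h] at hu; exact absurd hu (by simp; linarith))
      · intro u hu; rw [interior_Iic] at hu
        exact hbd u (ne_of_lt hu) (by intro h; rw [h] at hu; exact absurd hu (by simp; linarith))
    have hIcc : ∀ y ∈ Icc (-L) L, ∀ z ∈ Icc (-L) L, f y = 0 → f z = 0 := by
      intro y hy z hz h
      refine gronwall_zero (F := F) (K := K) (convex_Icc (-L) L) hfc hf0 ?_ ?_ hy h z hz
      · intro u hu; rw [interior_Icc] at hu
        exact hfd u (ne_of_gt hu.1) (ne_of_lt hu.2)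
      · intro u hu; rw [interior_Icc] at hu
        exact hbd u (ne_of_gt hu.1) (ne_of_lt hu.2)
    have hIci : ∀ y ∈ Ici L, ∀ z ∈ Ici L, f y = 0 → f z = 0 := by
      intro y hy z hz h
      refine gronwall_zero (F := F) (K := K) (convex_Ici L) hfc hf0 ?_ ?_ hy h z hz
      · intro u hu; rw [interior_Ici] at hu
        exact hfd u (by intro h; rw [h] at hu; exact absurd hu (by simp; linarith)) (ne_of_gt hu)
      · intro u hu; rw [interior_Ici] at hu
        exact hbd u (by intro h; rw [h] at hu; exact absurd hu (by simp; linarith)) (ne_of_gt hu)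
    -- get vanishing at -L and L
    have hmid : f (-L) = 0 ∧ f L = 0 := by
      rcases le_total x₀ (-L) with h | h
      · have h1 : f (-L) = 0 := hIic x₀ h (-L) self_mem_Iic hx0
        exact ⟨h1, hIcc (-L) (left_mem_Icc.2 hLL.le) L (right_mem_Icc.2 hLL.le) h1⟩
      rcases le_total x₀ L with h' | h'
      · have h1 : f (-L) = 0 := hIcc x₀ ⟨h, h'⟩ (-L) (left_mem_Icc.2 hLL.le) hx0
        exact ⟨h1, hIcc x₀ ⟨h, h'⟩ L (right_mem_Icc.2 hLL.le) hx0⟩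
      · have h1 : f L = 0 := hIci x₀ h' L self_mem_Ici hx0
        exact ⟨hIcc L (right_mem_Icc.2 hLL.le) (-L) (left_mem_Icc.2 hLL.le) h1, h1⟩
    intro x
    rcases le_total x (-L) with h | h
    · exact hIic (-L) self_mem_Iic x h hmid.1
    rcases le_total x L with h' | h'
    · exact hIcc (-L) (left_mem_Icc.2 hLL.le) x ⟨h, h'⟩ hmid.1
    · exact hIci L self_mem_Ici x h' hmid.2
  intro x
  have hzx := hz x
  simp only [hf] at hzx
  have h1 : ψ x ^ 2 = 0 := by nlinarith [sq_nonneg (ψ x), sq_nonneg (deriv ψ x)]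
  exact pow_eq_zero_iff two_ne_zero |>.mp h1

/-- Case Λ < -1 : the weighted energy argument forces ψ ≡ 0. -/
lemma no_lt_neg_one {L Λ : ℝ} {φ ψ : ℝ → ℝ} (hL : 0 < L) (hΛ : Λ < -1)
    (hψ1 : ContDiff ℝ 1 ψ)
    (hψode : ∀ x : ℝ, x ≠ -L → x ≠ L →
      HasDerivAt (deriv ψ) ((Dfun L 0 x * Real.cos (φ x) + Λ) * ψ x) x)
    (hψtop : Tendsto ψ atTop (𝓝 0)) (hψ'top : Tendsto (deriv ψ) atTop (𝓝 0))
    (hφd : Differentiable ℝ φ) (hφ'pos : ∀ x, 0 < deriv φ x)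
    (htop : Tendsto φ atTop (𝓝 (2*π))) : ∀ x, ψ x = 0 := by
  have hψd : Differentiable ℝ ψ := hψ1.differentiable one_ne_zero
  have hψ'c : Continuous (deriv ψ) := hψ1.continuous_deriv le_rfl
  set ε : ℝ := -(1+Λ) with hεdef
  have hε : 0 < ε := by simp only [hεdef]; linarith
  set G : ℝ → ℝ := fun x => deriv ψ x ^ 2 - (Real.cos (φ x) + Λ) * ψ x ^ 2 with hG
  have hGc : Continuous G := (hψ'c.pow 2).sub
    (((Real.continuous_cos.comp hφd.continuous).add continuous_const).mul (hψd.continuous.pow 2))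
  have hGlb : ∀ x, ε * ψ x ^ 2 ≤ G x := by
    intro x
    simp only [hG, hεdef]
    nlinarith [Real.cos_le_one (φ x), sq_nonneg (ψ x), sq_nonneg (deriv ψ x)]
  set H : ℝ → ℝ := fun x => G x * Real.exp (ε⁻¹ * φ x) with hH
  have hHc : Continuous H := hGc.mul (Real.continuous_exp.comp (continuous_const.mul hφd.continuous))
  have hHmono : MonotoneOn H (Ici L) := by
    apply monoOn_of_hasDeriv (f' := fun x =>
      (Real.sin (φ x) * deriv φ x * ψ x ^ 2) * Real.exp (ε⁻¹ * φ x)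
        + G x * (Real.exp (ε⁻¹ * φ x) * (ε⁻¹ * deriv φ x))) (convex_Ici L) hHc.continuousOn
    · intro x hx
      rw [interior_Ici] at hx
      have hx' : L < x := hx
      have hx1 : x ≠ -L := by intro h; rw [h] at hx'; linarith
      have hx2 : x ≠ L := ne_of_gt hx'
      have hD : Dfun L 0 x = 1 := if_neg (not_lt.2 (by rw [abs_of_pos (by linarith : (0:ℝ) < x)]; linarith))
      have hGd : HasDerivAt G (Real.sin (φ x) * deriv φ x * ψ x ^ 2) x := by
        have h1 := (hψode x hx1 hx2).fun_pow 2
        have h2 := (((hφd x).hasDerivAt.cos).add_const Λ).fun_mul ((hψd x).hasDerivAt.fun_pow 2)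
        have h3 := h1.fun_sub h2
        refine h3.congr_deriv ?_
        rw [hD]
        ring
      have hexp : HasDerivAt (fun y => Real.exp (ε⁻¹ * φ y)) (Real.exp (ε⁻¹ * φ x) * (ε⁻¹ * deriv φ x)) x :=
        ((hφd x).hasDerivAt.const_mul ε⁻¹).exp
      exact hGd.mul hexp
    · intro x hx
      have he : (0:ℝ) < Real.exp (ε⁻¹ * φ x) := Real.exp_pos _
      have hGi : ψ x ^ 2 ≤ ε⁻¹ * G x := by
        have h := mul_le_mul_of_nonneg_left (hGlb x) (inv_nonneg.2 hε.le)
        rwa [← mul_assoc, inv_mul_cancel₀ (ne_of_gt hε), one_mul] at h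
      have k1 : 0 ≤ deriv φ x * (ε⁻¹ * G x - ψ x ^ 2) := mul_nonneg (hφ'pos x).le (by linarith)
      have k2 : 0 ≤ (1 + Real.sin (φ x)) * ψ x ^ 2 :=
        mul_nonneg (by linarith [Real.neg_one_le_sin (φ x)]) (sq_nonneg _)
      have k3 : 0 ≤ deriv φ x * ((1 + Real.sin (φ x)) * ψ x ^ 2) := mul_nonneg (hφ'pos x).le k2
      nlinarith [mul_nonneg he.le k1, mul_nonneg he.le k3]
  have hHtop : Tendsto H atTop (𝓝 0) := by
    have hGt : Tendsto G atTop (𝓝 ((0:ℝ)^2 - (Real.cos (2*π) + Λ) * 0^2)) := by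
      exact (hψ'top.pow 2).sub
        ((((Real.continuous_cos.tendsto (2*π)).comp htop).add_const Λ).mul (hψtop.pow 2))
    have hGt0 : Tendsto G atTop (𝓝 0) := by simpa using hGt
    have hexpt : Tendsto (fun x => Real.exp (ε⁻¹ * φ x)) atTop (𝓝 (Real.exp (ε⁻¹ * (2*π)))) :=
      (Real.continuous_exp.tendsto _).comp ((tendsto_const_nhds.mul htop))
    have := hGt0.mul hexpt
    simpa using this
  have hHL0 : H L = 0 := by
    have hle : H L ≤ 0 := by
      refine ge_of_tendsto hHtop ?_
      filter_upwards [eventually_ge_atTop L] with x hx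
      exact hHmono self_mem_Ici hx hx
    have hge : 0 ≤ H L := by
      have h1 : 0 ≤ G L := le_trans (by positivity) (hGlb L)
      exact mul_nonneg h1 (Real.exp_pos _).le
    linarith
  have hGL : G L = 0 := by
    have he : Real.exp (ε⁻¹ * φ L) ≠ 0 := ne_of_gt (Real.exp_pos _)
    exact (mul_eq_zero.1 hHL0).resolve_right he
  have hψL : ψ L = 0 := by
    have h1 := hGlb L
    rw [hGL] at h1
    have h2 : ψ L ^ 2 = 0 := by nlinarith [sq_nonneg (ψ L)]
    exact pow_eq_zero_iff two_ne_zero |>.mp h2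
  have hψ'L : deriv ψ L = 0 := by
    have h1 := hGlb L
    rw [hGL] at h1
    have hsq : ψ L ^ 2 = 0 := by rw [hψL]; ring
    have h2 : deriv ψ L ^ 2 = 0 := by
      simp only [hG] at hGL
      rw [hsq, mul_zero, sub_zero] at hGL
      exact hGL
    exact pow_eq_zero_iff two_ne_zero |>.mp h2
  exact eigen_unique hL hψ1 hψode hψL hψ'L

/-- Case Λ = -1 : tail contraction argument forces ψ ≡ 0. -/
lemma no_eq_neg_one {L : ℝ} {φ ψ : ℝ → ℝ} (hL : 0 < L)
    (hψ1 : ContDiff ℝ 1 ψ)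
    (hψode : ∀ x : ℝ, x ≠ -L → x ≠ L →
      HasDerivAt (deriv ψ) ((Dfun L 0 x * Real.cos (φ x) + (-1)) * ψ x) x)
    (hψtop : Tendsto ψ atTop (𝓝 0)) (hψ'top : Tendsto (deriv ψ) atTop (𝓝 0))
    (hφd : Differentiable ℝ φ) (hmono : StrictMono φ) (hub : ∀ x, φ x < 2*π)
    (hsqR : ∀ x, L ≤ x → deriv φ x = 2 * Real.sin (φ x / 2))
    (htop : Tendsto φ atTop (𝓝 (2*π))) : ∀ x, ψ x = 0 := by
  have hpi := Real.pi_pos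
  have hψd : Differentiable ℝ ψ := hψ1.differentiable one_ne_zero
  have hψ'c : Continuous (deriv ψ) := hψ1.continuous_deriv le_rfl
  -- pick x₁ beyond L where φ > 2π - 1
  obtain ⟨x₁, hx₁L, hx₁φ⟩ : ∃ x₁, L < x₁ ∧ 2*π - 1 < φ x₁ := by
    have h1 : ∀ᶠ x : ℝ in atTop, 2*π - 1 < φ x :=
      htop.eventually (eventually_gt_nhds (by linarith))
    obtain ⟨x₁, h₁, h₂⟩ := (eventually_gt_atTop L |>.and h1).exists
    exact ⟨x₁, h₁, h₂⟩
  have hθ01 : ∀ x, x₁ ≤ x → 0 < 2*π - φ x ∧ 2*π - φ x < 1 := by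
    intro x hx
    refine ⟨by linarith [hub x], ?_⟩
    have := hmono.monotone hx
    linarith
  -- exponential decay of θ = 2π - φ
  have hθdecay : ∀ x, x₁ ≤ x → 2*π - φ x ≤ Real.exp (-((x - x₁)/2)) := by
    have hanti : AntitoneOn (fun x => (2*π - φ x) * Real.exp ((x - x₁)/2)) (Ici x₁) := by
      apply antiOn_of_hasDeriv (f' := fun x =>
        (-(deriv φ x)) * Real.exp ((x - x₁)/2)
          + (2*π - φ x) * (Real.exp ((x - x₁)/2) * (1/2))) (convex_Ici x₁)
      · exact ((continuous_const.sub hφd.continuous).mul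
          (Real.continuous_exp.comp ((continuous_id.sub continuous_const).div_const 2))).continuousOn
      · intro x hx
        have h1 : HasDerivAt (fun y => 2*π - φ y) (-(deriv φ x)) x :=
          ((hφd x).hasDerivAt.const_sub (2*π))
        have h2 : HasDerivAt (fun y => Real.exp ((y - x₁)/2)) (Real.exp ((x - x₁)/2) * (1/2)) x := by
          have := (((hasDerivAt_id x).sub_const x₁).div_const 2).exp
          simpa using this
        exact h1.mul h2
      · intro x hx
        rw [interior_Ici] at hx
        have hx' : x₁ < x := hx
        obtain ⟨hθ0, hθ1⟩ := hθ01 x hx'.le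
        set θ : ℝ := 2*π - φ x with hθdef
        clear_value θ
        have he : (0:ℝ) < Real.exp ((x - x₁)/2) := Real.exp_pos _
        have hd : deriv φ x = 2 * Real.sin (θ/2) := by
          rw [hsqR x (by linarith)]
          rw [show φ x / 2 = π - θ/2 by simp only [hθdef]; ring, Real.sin_pi_sub]
        have hsin : Real.sin (θ/2) > θ/2 - (θ/2)^3/4 :=
          by have := Real.sin_gt_sub_cube (x := θ/2) (by linarith); nlinarith [pow_pos (show (0:ℝ) < θ/2 by linarith) 3]
        have hts : θ*θ < θ := by nlinarith [hθ0, hθ1]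
        have hcube : θ^3 ≤ θ := by nlinarith [mul_lt_mul_of_pos_left hts hθ0]
        have h8 : (θ/2)^3 = θ^3/8 := by ring
        have hsin2 : θ/4 ≤ Real.sin (θ/2) := by linarith [hsin, hcube, hθ0, h8]
        rw [hd]
        nlinarith [mul_nonneg (mul_nonneg (by linarith : (0:ℝ) ≤ θ) he.le) (by norm_num : (0:ℝ) ≤ (1:ℝ))]
    intro x hx
    have h1 := hanti self_mem_Ici hx hx
    simp only [sub_self, zero_div, Real.exp_zero, mul_one] at h1
    have h2 : (2*π - φ x₁) ≤ 1 := by linarith [(hθ01 x₁ le_rfl).2]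
    have he : (0:ℝ) < Real.exp ((x - x₁)/2) := Real.exp_pos _
    rw [show -((x - x₁)/2) = -((x-x₁)/2) from rfl, Real.exp_neg, ← one_div, le_div_iff₀ he]
    calc (2*π - φ x) * Real.exp ((x - x₁)/2) ≤ 2*π - φ x₁ := h1
      _ ≤ 1 := h2
  -- decay of the potential q = 1 - cos φ
  have hq : ∀ x, x₁ ≤ x → 1 - Real.cos (φ x) ≤ Real.exp (-(x - x₁)) / 2 := by
    intro x hx
    set θ : ℝ := 2*π - φ x with hθdef
    clear_value θ
    have hcosθ : Real.cos (φ x) = Real.cos θ := by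
      simp only [hθdef]
      rw [Real.cos_sub]
      simp
    have hc2 : Real.cos θ = 1 - 2 * Real.sin (θ/2)^2 := by
      have hct := Real.cos_two_mul (θ/2)
      have h2 : 2*(θ/2) = θ := by ring
      rw [h2] at hct
      have hpy := Real.sin_sq_add_cos_sq (θ/2)
      linarith
    have habs : |Real.sin (θ/2)| ≤ |θ/2| := Real.abs_sin_le_abs
    have hs2 : Real.sin (θ/2)^2 ≤ (θ/2)^2 := by
      have := pow_le_pow_left₀ (abs_nonneg _) habs 2
      simpa [sq_abs] using this
    have hθe := hθdecay x hx
    have hθ0 := (hθ01 x hx).1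
    rw [← hθdef] at hθe hθ0
    have hexpsq : Real.exp (-((x - x₁)/2)) ^ 2 = Real.exp (-(x - x₁)) := by
      rw [sq, ← Real.exp_add]
      congr 1
      ring
    have hθsq : θ^2 ≤ Real.exp (-(x - x₁)) := by
      rw [← hexpsq]
      have := pow_le_pow_left₀ hθ0.le hθe 2
      simpa using this
    rw [hcosθ, hc2]
    nlinarith
  -- uniform bound for ψ on [x₁, ∞)
  obtain ⟨M, hM0, hM⟩ : ∃ M : ℝ, 0 < M ∧ ∀ x, x₁ ≤ x → |ψ x| ≤ M := by
    have hev : ∀ᶠ x : ℝ in atTop, |ψ x| ≤ 1 := by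
      have := hψtop.abs
      simp only [abs_zero] at this
      exact this.eventually (eventually_le_nhds (by norm_num : (0:ℝ) < 1))
    obtain ⟨C, hC⟩ := eventually_atTop.1 hev
    obtain ⟨B, hB⟩ := (isCompact_Icc (a := x₁) (b := C)).exists_bound_of_continuousOn
      hψd.continuous.continuousOn
    refine ⟨max B 1, lt_of_lt_of_le one_pos (le_max_right _ _), ?_⟩
    intro x hx
    rcases le_total x C with h | h
    · have := hB x ⟨hx, h⟩
      rw [Real.norm_eq_abs] at this
      exact le_trans this (le_max_left _ _)
    · exact le_trans (hC x h) (le_max_right _ _)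
  -- contraction step
  have hstep : ∀ m : ℝ, 0 ≤ m → (∀ x, x₁ ≤ x → |ψ x| ≤ m) →
      ∀ x, x₁ ≤ x → |ψ x| ≤ m/2 * Real.exp (-(x - x₁)) := by
    intro m hm hmb
    have hg : ∀ t, x₁ ≤ t → |(Real.cos (φ t) + (-1)) * ψ t| ≤ m/2 * Real.exp (-(t - x₁)) := by
      intro t ht
      rw [abs_mul]
      have h1 : |Real.cos (φ t) + (-1)| = 1 - Real.cos (φ t) := by
        rw [abs_of_nonpos (by linarith [Real.cos_le_one (φ t)])]; ring
      rw [h1]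
      calc (1 - Real.cos (φ t)) * |ψ t|
          ≤ (Real.exp (-(t - x₁)) / 2) * m :=
            mul_le_mul (hq t ht) (hmb t ht) (abs_nonneg _) (by positivity)
        _ = m/2 * Real.exp (-(t - x₁)) := by ring
    have hint : ∀ s y : ℝ, x₁ ≤ s → s ≤ y →
        (∫ t in s..y, m/2 * Real.exp (-(t - x₁))) ≤ m/2 * Real.exp (-(s - x₁)) := by
      intro s y hs hsy
      have hftc : (∫ t in s..y, m/2 * Real.exp (-(t - x₁)))
          = (-(m/2) * Real.exp (-(y - x₁))) - (-(m/2) * Real.exp (-(s - x₁))) := by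
        apply intervalIntegral.integral_eq_sub_of_hasDerivAt
        · intro t ht
          have h := ((((hasDerivAt_id t).sub_const x₁).fun_neg).exp).const_mul (-(m/2))
          refine h.congr_deriv ?_
          simp
        · exact (continuous_const.mul (Real.continuous_exp.comp
            ((continuous_id.sub continuous_const).neg))).intervalIntegrable s y
      rw [hftc]
      have := Real.exp_pos (-(y - x₁))
      nlinarith [hm]
    have hd' : ∀ s, x₁ ≤ s → |deriv ψ s| ≤ m/2 * Real.exp (-(s - x₁)) := by
      intro s hs
      have hkey : ∀ y, s ≤ y → |deriv ψ s| ≤ |deriv ψ y| + m/2 * Real.exp (-(s - x₁)) := by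
        intro y hy
        have hcont : Continuous (fun t => (Real.cos (φ t) + (-1)) * ψ t) :=
          ((Real.continuous_cos.comp hφd.continuous).add continuous_const).mul hψd.continuous
        have hftc : (∫ t in s..y, (Real.cos (φ t) + (-1)) * ψ t) = deriv ψ y - deriv ψ s := by
          apply intervalIntegral.integral_eq_sub_of_hasDerivAt
          · intro t ht
            rw [uIcc_of_le hy] at ht
            have htL : L < t := by linarith [ht.1]
            have hD : Dfun L 0 t = 1 :=
              if_neg (not_lt.2 (by rw [abs_of_pos (by linarith : (0:ℝ) < t)]; linarith))
            have h2 := hψode t (by intro hh; rw [hh] at htL; linarith) (ne_of_gt htL)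
            rw [hD, one_mul] at h2
            exact h2
          · exact hcont.intervalIntegrable s y
        have habs : |∫ t in s..y, (Real.cos (φ t) + (-1)) * ψ t| ≤ m/2 * Real.exp (-(s - x₁)) := by
          calc |∫ t in s..y, (Real.cos (φ t) + (-1)) * ψ t|
              ≤ ∫ t in s..y, |(Real.cos (φ t) + (-1)) * ψ t| :=
                intervalIntegral.abs_integral_le_integral_abs hy
            _ ≤ ∫ t in s..y, m/2 * Real.exp (-(t - x₁)) := by
                apply intervalIntegral.integral_mono_on hy
                · exact hcont.abs.intervalIntegrable s y
                · exact (continuous_const.mul (Real.continuous_exp.comp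
                    ((continuous_id.sub continuous_const).neg))).intervalIntegrable s y
                · intro t ht
                  exact hg t (by linarith [ht.1])
            _ ≤ m/2 * Real.exp (-(s - x₁)) := hint s y hs hy
        have h2 : deriv ψ s = deriv ψ y - (∫ t in s..y, (Real.cos (φ t) + (-1)) * ψ t) := by
          rw [hftc]; ring
        rw [h2]
        calc |deriv ψ y - (∫ t in s..y, (Real.cos (φ t) + (-1)) * ψ t)|
            ≤ |deriv ψ y| + |∫ t in s..y, (Real.cos (φ t) + (-1)) * ψ t| := abs_sub _ _
          _ ≤ |deriv ψ y| + m/2 * Real.exp (-(s - x₁)) := by linarith [habs]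
      have hT : Tendsto (fun y => |deriv ψ y| + m/2 * Real.exp (-(s - x₁))) atTop
          (𝓝 (0 + m/2 * Real.exp (-(s - x₁)))) := by
        have h1 := hψ'top.abs
        simp only [abs_zero] at h1
        exact h1.add_const _
      have := ge_of_tendsto hT ((eventually_ge_atTop s).mono fun y hy => hkey y hy)
      simpa using this
    intro x hx
    have hkey : ∀ y, x ≤ y → |ψ x| ≤ |ψ y| + m/2 * Real.exp (-(x - x₁)) := by
      intro y hy
      have hftc : (∫ t in x..y, deriv ψ t) = ψ y - ψ x :=
        intervalIntegral.integral_eq_sub_of_hasDerivAt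
          (fun t _ => (hψd t).hasDerivAt) (hψ'c.intervalIntegrable x y)
      have habs : |∫ t in x..y, deriv ψ t| ≤ m/2 * Real.exp (-(x - x₁)) := by
        calc |∫ t in x..y, deriv ψ t|
            ≤ ∫ t in x..y, |deriv ψ t| := intervalIntegral.abs_integral_le_integral_abs hy
          _ ≤ ∫ t in x..y, m/2 * Real.exp (-(t - x₁)) := by
              apply intervalIntegral.integral_mono_on hy
              · exact hψ'c.abs.intervalIntegrable x y
              · exact (continuous_const.mul (Real.continuous_exp.comp
                  ((continuous_id.sub continuous_const).neg))).intervalIntegrable x y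
              · intro t ht
                exact hd' t (by linarith [ht.1])
          _ ≤ m/2 * Real.exp (-(x - x₁)) := hint x y hx hy
      have h2 : ψ x = ψ y - (∫ t in x..y, deriv ψ t) := by rw [hftc]; ring
      rw [h2]
      calc |ψ y - (∫ t in x..y, deriv ψ t)|
          ≤ |ψ y| + |∫ t in x..y, deriv ψ t| := abs_sub _ _
        _ ≤ |ψ y| + m/2 * Real.exp (-(x - x₁)) := by linarith [habs]
    have hT : Tendsto (fun y => |ψ y| + m/2 * Real.exp (-(x - x₁))) atTop
        (𝓝 (0 + m/2 * Real.exp (-(x - x₁)))) := by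
      have h1 := hψtop.abs
      simp only [abs_zero] at h1
      exact h1.add_const _
    have := ge_of_tendsto hT ((eventually_ge_atTop x).mono fun y hy => hkey y hy)
    simpa using this
  -- iterate
  have hiter : ∀ n : ℕ, ∀ x, x₁ ≤ x → |ψ x| ≤ M / 2^n := by
    intro n
    induction n with
    | zero => simpa using hM
    | succ k ih =>
      intro x hx
      have h1 := hstep (M / 2^k) (by positivity) ih x hx
      have h2 : Real.exp (-(x - x₁)) ≤ 1 := Real.exp_le_one_iff.2 (by linarith)
      calc |ψ x| ≤ (M/2^k)/2 * Real.exp (-(x - x₁)) := h1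
        _ ≤ (M/2^k)/2 * 1 := by
            apply mul_le_mul_of_nonneg_left h2 (by positivity)
        _ = M / 2^(k+1) := by rw [pow_succ]; ring
  have hzero : ∀ x, x₁ ≤ x → ψ x = 0 := by
    intro x hx
    have hlim : Tendsto (fun n : ℕ => M / 2^n) atTop (𝓝 0) := by
      have h := tendsto_pow_atTop_nhds_zero_of_lt_one
        (by norm_num : (0:ℝ) ≤ 1/2) (by norm_num : (1:ℝ)/2 < 1)
      have h2 := h.const_mul M
      rw [mul_zero] at h2
      refine h2.congr fun n => ?_
      rw [div_pow, one_pow, div_eq_mul_inv, div_eq_mul_inv]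
      ring_nf
    have hle : |ψ x| ≤ 0 := ge_of_tendsto hlim (Eventually.of_forall fun n => hiter n x hx)
    exact abs_nonpos_iff.mp hle
  have hx2 : ψ (x₁+1) = 0 := hzero _ (by linarith)
  have hEqv : ψ =ᶠ[𝓝 (x₁+1)] (fun _ => (0:ℝ)) := by
    filter_upwards [Ioi_mem_nhds (lt_add_one x₁)] with y hy
    exact hzero y (le_of_lt hy)
  have hd2 : deriv ψ (x₁+1) = 0 := by
    have h := hEqv.deriv_eq
    simpa using h
  exact eigen_unique hL hψ1 hψode hx2 hd2

/-- Case Λ ≥ 0 : Sturm-type argument with the Wronskian against φ'. -/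
lemma no_nonneg_aux {L Λ : ℝ} {φ χ : ℝ → ℝ} (hL : 0 < L) (hΛ : 0 ≤ Λ)
    (hφ1 : ContDiff ℝ 1 φ)
    (hφout : ∀ x : ℝ, L < |x| → HasDerivAt (deriv φ) (Real.sin (φ x)) x)
    (hφin : ∀ x ∈ Ioo (-L) L, HasDerivAt (deriv φ) (0:ℝ) x)
    (hφ'pos : ∀ x, 0 < deriv φ x)
    (hsL : 0 < Real.sin (φ (-L))) (hsR : Real.sin (φ L) = - Real.sin (φ (-L)))
    (hφ'top : Tendsto (deriv φ) atTop (𝓝 0)) (hφ'bot : Tendsto (deriv φ) atBot (𝓝 0))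
    (hφtop : Tendsto φ atTop (𝓝 (2*π))) (hφbot : Tendsto φ atBot (𝓝 0))
    (hχ1 : ContDiff ℝ 1 χ)
    (hχode : ∀ x : ℝ, x ≠ -L → x ≠ L →
      HasDerivAt (deriv χ) ((Dfun L 0 x * Real.cos (φ x) + Λ) * χ x) x)
    (hχbot : Tendsto χ atBot (𝓝 0)) (hχtop : Tendsto χ atTop (𝓝 0))
    (hχ'bot : Tendsto (deriv χ) atBot (𝓝 0)) (hχ'top : Tendsto (deriv χ) atTop (𝓝 0))
    {x₀ : ℝ} (hx₀ : 0 < χ x₀) : False := by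
  have hLL : -L < L := by linarith
  have hφd : Differentiable ℝ φ := hφ1.differentiable one_ne_zero
  have hφ'c : Continuous (deriv φ) := hφ1.continuous_deriv le_rfl
  have hχd : Differentiable ℝ χ := hχ1.differentiable one_ne_zero
  have hχc : Continuous χ := hχd.continuous
  have hχ'c : Continuous (deriv χ) := hχ1.continuous_deriv le_rfl
  have habsL : |(-L : ℝ)| = L := by rw [abs_neg, abs_of_pos hL]
  have habsR : |(L : ℝ)| = L := abs_of_pos hL
  set Wout : ℝ → ℝ := fun x => deriv χ x * deriv φ x - Real.sin (φ x) * χ x with hWout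
  set Win : ℝ → ℝ := fun x => deriv χ x * deriv φ x with hWin
  set Ω : ℝ → ℝ := fun x => deriv χ x * deriv φ x - Dfun L 0 x * Real.sin (φ x) * χ x with hΩ
  have hΩout : ∀ x : ℝ, L ≤ |x| → Ω x = Wout x := by
    intro x hx
    have hD : Dfun L 0 x = 1 := if_neg (not_lt.2 hx)
    simp only [hΩ, hWout, hD, one_mul]
  have hΩin : ∀ x : ℝ, |x| < L → Ω x = Win x := by
    intro x hx
    have hD : Dfun L 0 x = 0 := if_pos hx
    simp only [hΩ, hWin, hD, zero_mul, mul_zero, zero_mul, sub_zero]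
  have hWoutc : Continuous Wout :=
    (hχ'c.mul hφ'c).sub ((Real.continuous_sin.comp hφd.continuous).mul hχc)
  have hWinc : Continuous Win := hχ'c.mul hφ'c
  -- derivatives
  have hWoutd : ∀ x : ℝ, L < |x| → HasDerivAt Wout (Λ * χ x * deriv φ x) x := by
    intro x hx
    have hx1 : x ≠ -L := by intro h; rw [h, habsL] at hx; linarith
    have hx2 : x ≠ L := by intro h; rw [h, habsR] at hx; linarith
    have hD : Dfun L 0 x = 1 := if_neg (not_lt.2 hx.le)
    have h1 := (hχode x hx1 hx2).fun_mul (hφout x hx)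
    have h2 := ((hφd x).hasDerivAt.sin).fun_mul (hχd x).hasDerivAt
    have h3 := h1.fun_sub h2
    refine h3.congr_deriv ?_
    rw [hD]
    ring
  have hWind : ∀ x ∈ Ioo (-L) L, HasDerivAt Win (Λ * χ x * deriv φ x) x := by
    intro x hx
    have hD : Dfun L 0 x = 0 := if_pos (abs_lt.2 ⟨hx.1, hx.2⟩)
    have h1 := (hχode x (ne_of_gt hx.1) (ne_of_lt hx.2)).fun_mul (hφin x hx)
    refine h1.congr_deriv ?_
    rw [hD]
    ring
  -- monotonicity of the pieces where χ ≥ 0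
  have mono_left : ∀ s t : ℝ, s ≤ t → t ≤ -L → (∀ x ∈ Icc s t, 0 ≤ χ x) → Wout s ≤ Wout t := by
    intro s t hst ht hpos
    refine monoOn_of_hasDeriv (f' := fun x => Λ * χ x * deriv φ x) (convex_Icc s t)
      hWoutc.continuousOn ?_ ?_ (left_mem_Icc.2 hst) (right_mem_Icc.2 hst) hst
    · intro x hx
      rw [interior_Icc] at hx
      refine hWoutd x ?_
      have : x < -L := lt_of_lt_of_le hx.2 ht
      rw [abs_of_neg (by linarith : x < 0)]
      linarith
    · intro x hx
      rw [interior_Icc] at hx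
      exact mul_nonneg (mul_nonneg hΛ (hpos x (Ioo_subset_Icc_self hx))) (hφ'pos x).le
  have mono_right : ∀ s t : ℝ, s ≤ t → L ≤ s → (∀ x ∈ Icc s t, 0 ≤ χ x) → Wout s ≤ Wout t := by
    intro s t hst hs hpos
    refine monoOn_of_hasDeriv (f' := fun x => Λ * χ x * deriv φ x) (convex_Icc s t)
      hWoutc.continuousOn ?_ ?_ (left_mem_Icc.2 hst) (right_mem_Icc.2 hst) hst
    · intro x hx
      rw [interior_Icc] at hx
      refine hWoutd x ?_
      have : L < x := lt_of_le_of_lt hs hx.1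
      rw [abs_of_pos (by linarith : (0:ℝ) < x)]
      exact this
    · intro x hx
      rw [interior_Icc] at hx
      exact mul_nonneg (mul_nonneg hΛ (hpos x (Ioo_subset_Icc_self hx))) (hφ'pos x).le
  have mono_mid : ∀ s t : ℝ, s ≤ t → -L ≤ s → t ≤ L → (∀ x ∈ Icc s t, 0 ≤ χ x) → Win s ≤ Win t := by
    intro s t hst hs ht hpos
    refine monoOn_of_hasDeriv (f' := fun x => Λ * χ x * deriv φ x) (convex_Icc s t)
      hWinc.continuousOn ?_ ?_ (left_mem_Icc.2 hst) (right_mem_Icc.2 hst) hst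
    · intro x hx
      rw [interior_Icc] at hx
      exact hWind x ⟨lt_of_le_of_lt hs hx.1, lt_of_lt_of_le hx.2 ht⟩
    · intro x hx
      rw [interior_Icc] at hx
      exact mul_nonneg (mul_nonneg hΛ (hpos x (Ioo_subset_Icc_self hx))) (hφ'pos x).le
  -- the jumps go the right way
  have jmp1 : 0 ≤ χ (-L) → Wout (-L) ≤ Win (-L) := by
    intro h
    simp only [hWout, hWin]
    have : 0 ≤ Real.sin (φ (-L)) * χ (-L) := mul_nonneg hsL.le h
    linarith
  have jmp2 : 0 ≤ χ L → Win L ≤ Wout L := by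
    intro h
    simp only [hWout, hWin, hsR]
    have : 0 ≤ Real.sin (φ (-L)) * χ L := mul_nonneg hsL.le h
    linarith
  -- chain across the middle
  have chain_mid : ∀ s t : ℝ, -L ≤ s → s ≤ t → t ≤ L → (∀ x ∈ Icc s t, 0 ≤ χ x) → Ω s ≤ Ω t := by
    intro s t hs hst ht hpos
    rcases eq_or_lt_of_le hst with rfl | hlt
    · exact le_rfl
    have h1 : Ω s ≤ Win s := by
      rcases eq_or_lt_of_le hs with rfl | hs'
      · rw [hΩout _ (le_of_eq habsL.symm)]
        exact jmp1 (hpos _ (left_mem_Icc.2 hst))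
      · rw [hΩin s (abs_lt.2 ⟨hs', lt_of_lt_of_le hlt ht⟩)]
    have h2 : Win t ≤ Ω t := by
      rcases eq_or_lt_of_le ht with rfl | ht'
      · rw [hΩout _ (le_of_eq habsR.symm)]
        exact jmp2 (hpos _ (right_mem_Icc.2 hst))
      · rw [hΩin t (abs_lt.2 ⟨lt_of_le_of_lt hs hlt, ht'⟩)]
    exact le_trans h1 (le_trans (mono_mid s t hst hs ht hpos) h2)
  -- full chain
  have hchain : ∀ s t : ℝ, s ≤ t → (∀ x ∈ Icc s t, 0 ≤ χ x) → Ω s ≤ Ω t := by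
    intro s t hst hpos
    have hsub : ∀ a b : ℝ, s ≤ a → b ≤ t → ∀ x ∈ Icc a b, 0 ≤ χ x := by
      intro a b ha hb x hx
      exact hpos x ⟨le_trans ha hx.1, le_trans hx.2 hb⟩
    rcases le_total t (-L) with h1 | h1
    · rw [hΩout s (le_trans (by linarith : L ≤ -s) (neg_le_abs s)),
        hΩout t (le_trans (by linarith : L ≤ -t) (neg_le_abs t))]
      exact mono_left s t hst h1 hpos
    rcases le_total L s with h2 | h2
    · rw [hΩout s (le_trans h2 (le_abs_self s)),
        hΩout t (le_trans (le_trans h2 hst) (le_abs_self t))]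
      exact mono_right s t hst h2 hpos
    rcases le_total s (-L) with h3 | h3
    · have ha : Ω s ≤ Ω (-L) := by
        rw [hΩout s (le_trans (by linarith : L ≤ -s) (neg_le_abs s)),
          hΩout (-L) (le_of_eq habsL.symm)]
        exact mono_left s (-L) h3 le_rfl (hsub s (-L) le_rfl h1)
      rcases le_total t L with h4 | h4
      · exact ha.trans (chain_mid (-L) t le_rfl h1 h4 (hsub (-L) t h3 le_rfl))
      · have hb := chain_mid (-L) L le_rfl hLL.le le_rfl (hsub (-L) L h3 h4)
        have hc : Ω L ≤ Ω t := by
          rw [hΩout L (le_of_eq habsR.symm),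
            hΩout t (le_trans h4 (le_abs_self t))]
          exact mono_right L t h4 le_rfl (hsub L t (by linarith) le_rfl)
        exact ha.trans (hb.trans hc)
    · rcases le_total t L with h4 | h4
      · exact chain_mid s t h3 hst h4 hpos
      · have hb := chain_mid s L h3 h2 le_rfl (hsub s L le_rfl h4)
        have hc : Ω L ≤ Ω t := by
          rw [hΩout L (le_of_eq habsR.symm),
            hΩout t (le_trans h4 (le_abs_self t))]
          exact mono_right L t h4 le_rfl (hsub L t (by linarith) le_rfl)
        exact hb.trans hc
  -- limits of Ω at ±∞
  have hΩbot : Tendsto Ω atBot (𝓝 0) := by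
    have hW : Tendsto Wout atBot (𝓝 (0*0 - Real.sin 0 * 0)) :=
      (hχ'bot.mul hφ'bot).sub (((Real.continuous_sin.tendsto 0).comp hφbot).mul hχbot)
    have hW0 : Tendsto Wout atBot (𝓝 0) := by simpa using hW
    refine hW0.congr' ?_
    filter_upwards [eventually_le_atBot (-L)] with x hx
    exact (hΩout x (by rw [abs_of_neg (by linarith : x < 0)]; linarith)).symm
  have hΩtop : Tendsto Ω atTop (𝓝 0) := by
    have hW : Tendsto Wout atTop (𝓝 (0*0 - Real.sin (2*π) * 0)) :=
      (hχ'top.mul hφ'top).sub (((Real.continuous_sin.tendsto (2*π)).comp hφtop).mul hχtop)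
    have hW0 : Tendsto Wout atTop (𝓝 0) := by
      simpa [Real.sin_two_pi] using hW
    refine hW0.congr' ?_
    filter_upwards [eventually_ge_atTop L] with x hx
    exact (hΩout x (by rw [abs_of_pos (by linarith : (0:ℝ) < x)]; exact hx)).symm
  -- ψ-zero extraction on the left
  have hzl : (∀ x, x ≤ x₀ → 0 < χ x) ∨
      ∃ s, s < x₀ ∧ χ s = 0 ∧ (∀ x, s < x → x ≤ x₀ → 0 < χ x) := by
    set S : Set ℝ := {x | x ≤ x₀ ∧ χ x ≤ 0} with hS
    have hclosed : IsClosed S :=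
      (isClosed_Iic.preimage continuous_id).inter (isClosed_Iic.preimage hχc)
    by_cases hne : S.Nonempty
    · right
      have hbdd : BddAbove S := ⟨x₀, fun y hy => hy.1⟩
      set s := sSup S with hsdef
      have hmem : s ∈ S := hclosed.csSup_mem hne hbdd
      have hsx₀ : s ≤ x₀ := hmem.1
      have hslt : s < x₀ := lt_of_le_of_ne hsx₀ (by intro h; rw [h] at hmem; linarith [hmem.2, hx₀])
      have hgt : ∀ x, s < x → x ≤ x₀ → 0 < χ x := by
        intro x hx1 hx2
        by_contra hcon
        push_neg at hcon
        have : x ∈ S := ⟨hx2, hcon⟩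
        have := le_csSup hbdd this
        linarith
      have h0 : χ s = 0 := by
        refine le_antisymm hmem.2 ?_
        have hts : Tendsto χ (𝓝[>] s) (𝓝 (χ s)) :=
          (hχc.tendsto s).mono_left nhdsWithin_le_nhds
        refine ge_of_tendsto hts ?_
        filter_upwards [Ioc_mem_nhdsGT_of_mem (⟨le_rfl, hslt⟩ : s ∈ Ico s x₀)] with y hy
        exact (hgt y hy.1 hy.2).le
      exact ⟨s, hslt, h0, hgt⟩
    · left
      intro x hx
      by_contra hcon
      push_neg at hcon
      exact hne ⟨x, hx, hcon⟩
  -- ψ-zero extraction on the right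
  have hzr : (∀ x, x₀ ≤ x → 0 < χ x) ∨
      ∃ t, x₀ < t ∧ χ t = 0 ∧ (∀ x, x₀ ≤ x → x < t → 0 < χ x) := by
    set S : Set ℝ := {x | x₀ ≤ x ∧ χ x ≤ 0} with hS
    have hclosed : IsClosed S :=
      (isClosed_Ici.preimage continuous_id).inter (isClosed_Iic.preimage hχc)
    by_cases hne : S.Nonempty
    · right
      have hbdd : BddBelow S := ⟨x₀, fun y hy => hy.1⟩
      set t := sInf S with htdef
      have hmem : t ∈ S := hclosed.csInf_mem hne hbdd
      have htx₀ : x₀ ≤ t := hmem.1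
      have hlt : x₀ < t := lt_of_le_of_ne htx₀ (by intro h; rw [← h] at hmem; linarith [hmem.2, hx₀])
      have hgt : ∀ x, x₀ ≤ x → x < t → 0 < χ x := by
        intro x hx1 hx2
        by_contra hcon
        push_neg at hcon
        have : x ∈ S := ⟨hx1, hcon⟩
        have := csInf_le hbdd this
        linarith
      have h0 : χ t = 0 := by
        refine le_antisymm hmem.2 ?_
        have hts : Tendsto χ (𝓝[<] t) (𝓝 (χ t)) :=
          (hχc.tendsto t).mono_left nhdsWithin_le_nhds
        refine ge_of_tendsto hts ?_
        filter_upwards [Ico_mem_nhdsLT_of_mem (⟨hlt, le_rfl⟩ : t ∈ Ioc x₀ t)] with y hy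
        exact (hgt y hy.1 hy.2).le
      exact ⟨t, hlt, h0, hgt⟩
    · left
      intro x hx
      by_contra hcon
      push_neg at hcon
      exact hne ⟨x, hx, hcon⟩
  -- uniqueness: χ cannot vanish to second order
  have huniq : ∀ s : ℝ, χ s = 0 → deriv χ s = 0 → False := by
    intro s h0 h0'
    have := eigen_unique hL hχ1 hχode h0 h0' x₀
    linarith
  -- derivative signs at one-sided zeros
  have hdl : ∀ s, s < x₀ → χ s = 0 → (∀ x, s < x → x ≤ x₀ → 0 < χ x) → 0 < deriv χ s := by
    intro s hs h0 hp
    have hge : 0 ≤ deriv χ s := by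
      have hd := (hχd s).hasDerivAt
      rw [hasDerivAt_iff_tendsto_slope] at hd
      have hd' : Tendsto (slope χ s) (𝓝[>] s) (𝓝 (deriv χ s)) :=
        hd.mono_left (nhdsWithin_mono s (fun y hy => ne_of_gt hy))
      refine ge_of_tendsto hd' ?_
      filter_upwards [Ioc_mem_nhdsGT_of_mem (⟨le_rfl, hs⟩ : s ∈ Ico s x₀)] with y hy
      rw [slope_def_field, h0, sub_zero]
      exact div_nonneg (hp y hy.1 hy.2).le (by linarith [hy.1])
    rcases eq_or_lt_of_le hge with h | h
    · exact absurd (huniq s h0 h.symm) id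
    · exact h
  have hdr : ∀ t, x₀ < t → χ t = 0 → (∀ x, x₀ ≤ x → x < t → 0 < χ x) → deriv χ t < 0 := by
    intro t ht h0 hp
    have hle : deriv χ t ≤ 0 := by
      have hd := (hχd t).hasDerivAt
      rw [hasDerivAt_iff_tendsto_slope] at hd
      have hd' : Tendsto (slope χ t) (𝓝[<] t) (𝓝 (deriv χ t)) :=
        hd.mono_left (nhdsWithin_mono t (fun y hy => ne_of_lt hy))
      refine le_of_tendsto hd' ?_
      filter_upwards [Ico_mem_nhdsLT_of_mem (⟨ht, le_rfl⟩ : t ∈ Ioc x₀ t)] with y hy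
      rw [slope_def_field, h0, sub_zero]
      exact div_nonpos_of_nonneg_of_nonpos (hp y hy.1 hy.2).le (by linarith [hy.2])
    rcases eq_or_lt_of_le hle with h | h
    · exact absurd (huniq t h0 h) id
    · exact h
  -- Ω at a zero of χ
  have hΩzero : ∀ s : ℝ, χ s = 0 → Ω s = deriv χ s * deriv φ s := by
    intro s h0
    simp only [hΩ, h0, mul_zero, sub_zero]
  -- the four scenarios
  rcases hzl with hposL | ⟨s, hs, hs0, hsp⟩
  · rcases hzr with hposR | ⟨t, ht, ht0, htp⟩
    · -- χ > 0 everywhere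
      have hpos : ∀ x, 0 < χ x := by
        intro x
        rcases le_total x x₀ with h | h
        · exact hposL x h
        · exact hposR x h
      have hΩnonneg : ∀ x, 0 ≤ Ω x := by
        intro x
        refine le_of_tendsto hΩbot ?_
        filter_upwards [eventually_le_atBot x] with y hy
        exact hchain y x hy (fun z _ => (hpos z).le)
      have hWinL : 0 < Win (-L) := by
        have h1 : Ω (-L) = Wout (-L) := hΩout (-L) (le_of_eq habsL.symm)
        have h2 : 0 ≤ Wout (-L) := h1 ▸ hΩnonneg (-L)
        have h3 : 0 < Real.sin (φ (-L)) * χ (-L) := mul_pos hsL (hpos (-L))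
        simp only [hWout] at h2
        simp only [hWin]
        linarith
      have hWinR : 0 < Win L := lt_of_lt_of_le hWinL
        (mono_mid (-L) L hLL.le le_rfl le_rfl (fun z _ => (hpos z).le))
      have hΩL : 0 < Ω L := by
        rw [hΩout L (le_of_eq habsR.symm)]
        have h3 : 0 < Real.sin (φ (-L)) * χ L := mul_pos hsL (hpos L)
        simp only [hWout, hsR]
        simp only [hWin] at hWinR
        linarith
      have hev2 : ∀ᶠ x in atTop, Ω x < Ω L :=
        hΩtop.eventually (eventually_lt_nhds hΩL)
      obtain ⟨x, h1, h2⟩ := ((eventually_ge_atTop L).and hev2).exists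
      exact absurd (hchain L x h1 (fun z _ => (hpos z).le)) (not_le.2 h2)
    · -- positive on the left, zero at t on the right
      have hΩt : Ω t < 0 := by
        rw [hΩzero t ht0]
        exact mul_neg_of_neg_of_pos (hdr t ht ht0 htp) (hφ'pos t)
      have hposIcc : ∀ x, x ≤ t → 0 ≤ χ x := by
        intro x hx
        rcases le_total x x₀ with h | h
        · exact (hposL x h).le
        · rcases eq_or_lt_of_le hx with rfl | h'
          · exact le_of_eq ht0.symm
          · exact (htp x h h').le
      have hev2 : ∀ᶠ x in atBot, Ω t < Ω x :=
        hΩbot.eventually (eventually_gt_nhds hΩt)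
      obtain ⟨x, h1, h2⟩ := ((eventually_le_atBot t).and hev2).exists
      exact absurd (hchain x t h1 (fun z hz => hposIcc z hz.2)) (not_le.2 h2)
  · rcases hzr with hposR | ⟨t, ht, ht0, htp⟩
    · -- zero at s on the left, positive on the right
      have hΩs : 0 < Ω s := by
        rw [hΩzero s hs0]
        exact mul_pos (hdl s hs hs0 hsp) (hφ'pos s)
      have hposIcc : ∀ x, s ≤ x → 0 ≤ χ x := by
        intro x hx
        rcases eq_or_lt_of_le hx with rfl | h'
        · exact le_of_eq hs0.symm
        rcases le_total x x₀ with h | h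
        · exact (hsp x h' h).le
        · exact (hposR x h).le
      have hev2 : ∀ᶠ x in atTop, Ω x < Ω s :=
        hΩtop.eventually (eventually_lt_nhds hΩs)
      obtain ⟨x, h1, h2⟩ := ((eventually_ge_atTop s).and hev2).exists
      exact absurd (hchain s x h1 (fun z hz => hposIcc z hz.1)) (not_le.2 h2)
    · -- zeros on both sides
      have hΩs : 0 < Ω s := by
        rw [hΩzero s hs0]
        exact mul_pos (hdl s hs hs0 hsp) (hφ'pos s)
      have hΩt : Ω t < 0 := by
        rw [hΩzero t ht0]
        exact mul_neg_of_neg_of_pos (hdr t ht ht0 htp) (hφ'pos t)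
      have hposIcc : ∀ x ∈ Icc s t, 0 ≤ χ x := by
        intro x hx
        rcases eq_or_lt_of_le hx.1 with rfl | h1
        · exact le_of_eq hs0.symm
        rcases eq_or_lt_of_le hx.2 with rfl | h2
        · exact le_of_eq ht0.symm
        rcases le_total x x₀ with h | h
        · exact (hsp x h1 h).le
        · exact (htp x h h2).le
      have := hchain s t (by linarith) hposIcc
      linarith

end Aux7

/-- `Λ` is an eigenvalue of the linearisation `L_pin` about the pinned fluxon `φpin`. -/
def IsEigenvalue (L d γ : ℝ) (φpin : ℝ → ℝ) (Λ : ℝ) : Prop :=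
  ∃ ψ : ℝ → ℝ, IsEigenfun L d γ φpin Λ ψ

/-- For `γ = 0`, `d = 0` and `L > 0`, every eigenvalue `Λ` of the linearisation
about the (unique) pinned fluxon for parameters `(L, 0, 0)` satisfies `−1 < Λ < 0`;
in particular the pinned fluxon is linearly stable (all eigenvalues `≤ 0`). -/
theorem stmt7 (L : ℝ) (hL : 0 < L) (φ : ℝ → ℝ) (hφ : IsPinnedFluxon L 0 0 φ)
    (Λ : ℝ) (hΛ : IsEigenvalue L 0 0 φ Λ) :
    -1 < Λ ∧ Λ < 0 := by
  obtain ⟨ψ, hψne, hψ1, hψode0, hψbot, hψtop, hψ'bot, hψ'top⟩ := hΛ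
  obtain ⟨hφ1, hφode0, hφbot0, hφtop0, hφ'bot, hφ'top⟩ := hφ
  rw [Real.arcsin_zero] at hφbot0 hφtop0
  have hφbot : Tendsto φ atBot (𝓝 0) := hφbot0
  have hφtop : Tendsto φ atTop (𝓝 (2*π)) := by
    have : (0:ℝ) + 2*π = 2*π := by ring
    rwa [this] at hφtop0
  obtain ⟨hφ'pos, hmono, hrange, hsqR, hsL, hsR, hout, hin⟩ :=
    Aux7.phi_facts hL hφ1 hφode0 hφbot hφtop hφ'bot hφ'top
  have hψode : ∀ x : ℝ, x ≠ -L → x ≠ L →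
      HasDerivAt (deriv ψ) ((Dfun L 0 x * Real.cos (φ x) + Λ) * ψ x) x := by
    intro x h1 h2
    obtain ⟨c, hc, he⟩ := hψode0 x h1 h2
    have hce : c = (Dfun L 0 x * Real.cos (φ x) + Λ) * ψ x := by linear_combination he
    rwa [hce] at hc
  obtain ⟨x₀, hx₀⟩ : ∃ x₀, ψ x₀ ≠ 0 := by
    by_contra hcon
    push_neg at hcon
    exact hψne (funext fun x => hcon x)
  constructor
  · by_contra hcon
    push_neg at hcon
    rcases eq_or_lt_of_le hcon with h1 | h1
    · -- Λ = -1
      subst h1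
      have hz := Aux7.no_eq_neg_one hL hψ1 hψode hψtop hψ'top
        (hφ1.differentiable one_ne_zero) hmono (fun x => (hrange x).2) hsqR hφtop
      exact hx₀ (hz x₀)
    · have hz := Aux7.no_lt_neg_one hL h1 hψ1 hψode hψtop hψ'top
        (hφ1.differentiable one_ne_zero) hφ'pos hφtop
      exact hx₀ (hz x₀)
  · by_contra hcon
    push_neg at hcon
    rcases lt_or_ge 0 (ψ x₀) with hx | hx
    · exact Aux7.no_nonneg_aux hL hcon hφ1 hout hin hφ'pos hsL hsR hφ'top hφ'bot hφtop hφbot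
        hψ1 hψode hψbot hψtop hψ'bot hψ'top hx
    · -- use -ψ
      have hxneg : ψ x₀ < 0 := lt_of_le_of_ne hx hx₀
      set χ : ℝ → ℝ := fun x => -ψ x with hχdef
      have hdχ : deriv χ = fun y => -deriv ψ y := funext fun y => deriv.neg
      have hχ1 : ContDiff ℝ 1 χ := hψ1.neg
      have hχode : ∀ x : ℝ, x ≠ -L → x ≠ L →
          HasDerivAt (deriv χ) ((Dfun L 0 x * Real.cos (φ x) + Λ) * χ x) x := by
        intro x h1 h2
        rw [hdχ]
        have h := (hψode x h1 h2).fun_neg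
        refine h.congr_deriv ?_
        simp only [hχdef]
        ring
      have hχbot : Tendsto χ atBot (𝓝 0) := by
        have := hψbot.neg
        simpa using this
      have hχtop : Tendsto χ atTop (𝓝 0) := by
        have := hψtop.neg
        simpa using this
      have hχ'bot : Tendsto (deriv χ) atBot (𝓝 0) := by
        rw [hdχ]
        have := hψ'bot.neg
        simpa using this
      have hχ'top : Tendsto (deriv χ) atTop (𝓝 0) := by
        rw [hdχ]
        have := hψ'top.neg
        simpa using this
      have hx' : 0 < χ x₀ := by simp only [hχdef]; linarith
      exact Aux7.no_nonneg_aux hL hcon hφ1 hout hin hφ'pos hsL hsR hφ'top hφ'bot hφtop hφbot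
        hχ1 hχode hχbot hχtop hχ'bot hχ'top hx'
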